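/- Any test set that detects all single stuck-at faults in a reversible circuit also detects all multiple stuck-at faults (i.e., any nonempty simultaneous collection of stuck-at faults at distinct wire-level sites). -/

import Mathlib

/-- Overwrite, at level `i`, the wires that carry a stuck-at fault of `M`. -/
def applyFaults {n d : ℕ} (M : Finset (Fin (d + 1) × Fin n × Bool)) (i : Fin (d + 1))
    (v : Fin n → Bool) : Fin n → Bool := fun j =>
  if (i, j, true) ∈ M then true else if (i, j, false) ∈ M then false else v j

open Fin.NatCast in
/-- The wire values at level `i` of the faulty circuit (faults `M`) on input `t`. -/
def faultyRun {n d : ℕ} (f : Fin (d + 1) → ((Fin n → Bool) ≃ (Fin n → Bool)))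
    (M : Finset (Fin (d + 1) × Fin n × Bool)) (t : Fin n → Bool) : ℕ → (Fin n → Bool)
  | 0 => applyFaults M 0 t
  | i + 1 =>
      applyFaults M (↑(i + 1)) (f (↑(i + 1)) ((f (↑i)).symm (faultyRun f M t i)))

lemma applyFaults_of_not_mem {n d : ℕ} (M : Finset (Fin (d + 1) × Fin n × Bool))
    (i : Fin (d + 1)) (h : ∀ j b, (i, j, b) ∉ M) (v : Fin n → Bool) :
    applyFaults M i v = v := by
  funext j
  simp [applyFaults, h j true, h j false]

lemma applyFaults_mem {n d : ℕ} {M : Finset (Fin (d + 1) × Fin n × Bool)}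
    (hdist : ∀ p ∈ M, ∀ q ∈ M, p.1 = q.1 → p.2.1 = q.2.1 → p = q)
    {i : Fin (d + 1)} {j : Fin n} {b : Bool} (hm : (i, j, b) ∈ M) (v : Fin n → Bool) :
    applyFaults M i v j = b := by
  cases b with
  | true => simp [applyFaults, hm]
  | false =>
    have ht : (i, j, true) ∉ M := by
      intro h
      have := hdist _ h _ hm rfl rfl
      simp at this
    simp [applyFaults, ht, hm]

open Fin.NatCast in
/-- Below the unique fault level, the faulty run agrees with the fault-free run. -/
lemma faultyRun_below {n d : ℕ} (f : Fin (d + 1) → ((Fin n → Bool) ≃ (Fin n → Bool)))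
    (h0 : f 0 = Equiv.refl _) (M : Finset (Fin (d + 1) × Fin n × Bool))
    (i : Fin (d + 1)) (hM : ∀ q ∈ M, q.1 = i) (t : Fin n → Bool) :
    ∀ k, k ≤ i.val → faultyRun f M t k = applyFaults M (↑k) (f (↑k) t) := by
  intro k
  induction k with
  | zero =>
    intro _
    show applyFaults M 0 t = applyFaults M (↑(0:ℕ)) (f (↑(0:ℕ)) t)
    norm_num [h0]
  | succ m ih =>
    intro hk
    have hm : m ≤ i.val := Nat.le_of_succ_le hk
    have hmlt : m < i.val := Nat.lt_of_succ_le hk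
    have hmd : m < d + 1 := by have := i.isLt; omega
    have hne : (↑m : Fin (d + 1)) ≠ i := by
      intro h
      have : ((↑m : Fin (d + 1))).val = i.val := by rw [h]
      rw [Fin.val_cast_of_lt hmd] at this
      omega
    have hnofault : ∀ j b, ((↑m : Fin (d + 1)), j, b) ∉ M := by
      intro j b hmem
      exact hne (hM _ hmem)
    have h1 : faultyRun f M t m = f (↑m) t := by
      rw [ih hm, applyFaults_of_not_mem M _ hnofault]
    show applyFaults M (↑(m + 1)) (f (↑(m + 1)) ((f (↑m)).symm (faultyRun f M t m))) =
        applyFaults M (↑(m + 1)) (f (↑(m + 1)) t)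
    rw [h1, Equiv.symm_apply_apply]

open Fin.NatCast in
/-- Above the maximal fault level, the faulty run evolves fault-free. -/
lemma faultyRun_above {n d : ℕ} (f : Fin (d + 1) → ((Fin n → Bool) ≃ (Fin n → Bool)))
    (M : Finset (Fin (d + 1) × Fin n × Bool)) (i : Fin (d + 1))
    (hM : ∀ q ∈ M, q.1.val ≤ i.val) (t : Fin n → Bool) :
    ∀ k, i.val ≤ k → k ≤ d →
      faultyRun f M t k = f (↑k) ((f i).symm (faultyRun f M t i.val)) := by
  intro k
  induction k with
  | zero =>
    intro h1 _
    have hi0 : i.val = 0 := Nat.le_zero.mp h1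
    have : (↑(0:ℕ) : Fin (d+1)) = i := by
      apply Fin.ext; rw [Fin.val_cast_of_lt (by omega)]; omega
    rw [hi0, this, Equiv.apply_symm_apply]
  | succ m ih =>
    intro h1 h2
    rcases Nat.lt_or_ge i.val (m + 1) with hlt | hge
    · have him : i.val ≤ m := Nat.le_of_lt_succ hlt
      have h3 : faultyRun f M t m = f (↑m) ((f i).symm (faultyRun f M t i.val)) :=
        ih him (by omega)
      have hnofault : ∀ j b, ((↑(m + 1) : Fin (d + 1)), j, b) ∉ M := by
        intro j b hmem
        have := hM _ hmem
        simp only at this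
        rw [Fin.val_cast_of_lt (by omega : m + 1 < d + 1)] at this
        omega
      show applyFaults M (↑(m + 1)) (f (↑(m + 1)) ((f (↑m)).symm (faultyRun f M t m))) = _
      rw [applyFaults_of_not_mem M _ hnofault, h3, Equiv.symm_apply_apply]
    · have hi : i.val = m + 1 := le_antisymm h1 hge
      have : (↑(m+1) : Fin (d+1)) = i := by
        apply Fin.ext; rw [Fin.val_cast_of_lt (by omega)]; omega
      rw [hi, this, Equiv.apply_symm_apply]

open Fin.NatCast in
/-- The faulty run at any level is an `applyFaults` image. -/
lemma faultyRun_apply {n d : ℕ} (f : Fin (d + 1) → ((Fin n → Bool) ≃ (Fin n → Bool)))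
    (M : Finset (Fin (d + 1) × Fin n × Bool)) (t : Fin n → Bool) (k : ℕ) :
    ∃ w, faultyRun f M t k = applyFaults M (↑k) w := by
  cases k with
  | zero => exact ⟨t, rfl⟩
  | succ m => exact ⟨_, rfl⟩

open Fin.NatCast in
/-- a test set detecting all single stuck-at faults detects all
multiple stuck-at faults (nonempty fault sets with distinct sites). -/
theorem stmt1 {n d : ℕ} (f : Fin (d + 1) → ((Fin n → Bool) ≃ (Fin n → Bool)))
    (h0 : f 0 = Equiv.refl _) (T : Set (Fin n → Bool))
    (hsingle : ∀ M : Finset (Fin (d + 1) × Fin n × Bool), M.card = 1 →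
        ∃ t ∈ T, faultyRun f M t d ≠ f (Fin.last d) t) :
    ∀ M : Finset (Fin (d + 1) × Fin n × Bool), M.Nonempty →
      (∀ p ∈ M, ∀ q ∈ M, p.1 = q.1 → p.2.1 = q.2.1 → p = q) →
      ∃ t ∈ T, faultyRun f M t d ≠ f (Fin.last d) t := by
  intro M hne hdist
  -- pick a fault at a maximal level
  have hne' : (M.image Prod.fst).Nonempty := hne.image _
  set i : Fin (d + 1) := (M.image Prod.fst).max' hne' with hi
  have hmem : i ∈ M.image Prod.fst := (M.image Prod.fst).max'_mem hne'
  obtain ⟨p, hpM, hpi⟩ := Finset.mem_image.mp hmem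
  obtain ⟨i', j, b⟩ := p
  simp only at hpi
  subst hpi
  have hmaxle : ∀ q ∈ M, q.1.val ≤ i.val := by
    intro q hq
    exact (M.image Prod.fst).le_max' _ (Finset.mem_image_of_mem _ hq)
  -- the single fault
  set M' : Finset (Fin (d + 1) × Fin n × Bool) := {(i, j, b)} with hM'
  obtain ⟨t, htT, hdet⟩ := hsingle M' (Finset.card_singleton _)
  refine ⟨t, htT, ?_⟩
  have hlast : (↑d : Fin (d + 1)) = Fin.last d := by
    apply Fin.ext; rw [Fin.val_cast_of_lt (by omega)]; rfl
  have hival : (↑(i.val) : Fin (d + 1)) = i := Fin.cast_val_eq_self i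
  -- analyze the single-fault run
  have hM'only : ∀ q ∈ M', q.1 = i := by
    intro q hq
    rw [hM', Finset.mem_singleton] at hq
    rw [hq]
  have hM'le : ∀ q ∈ M', q.1.val ≤ i.val := fun q hq => le_of_eq (congrArg Fin.val (hM'only q hq))
  have hid : i.val ≤ d := by have := i.isLt; omega
  have hsrun : faultyRun f M' t i.val = applyFaults M' i (f i t) := by
    have := faultyRun_below f h0 M' i hM'only t i.val le_rfl
    rwa [hival] at this
  have hsd : faultyRun f M' t d = f (Fin.last d) ((f i).symm (applyFaults M' i (f i t))) := by
    rw [faultyRun_above f M' i hM'le t d hid le_rfl, hsrun, hlast]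
  -- deduce the fault value disagrees with the fault-free value at wire j
  have hbne : (f i t) j ≠ b := by
    intro hb
    apply hdet
    rw [hsd]
    have : applyFaults M' i (f i t) = f i t := by
      funext j'
      simp only [applyFaults, hM', Finset.mem_singleton, Prod.mk.injEq]
      by_cases hjj : j' = j
      · subst hjj
        cases b <;> simp_all
      · simp [hjj]
    rw [this, Equiv.symm_apply_apply]
  -- now the multiple fault
  obtain ⟨w, hw⟩ := faultyRun_apply f M t i.val
  rw [hival] at hw
  have hvj : faultyRun f M t i.val j = b := by
    rw [hw]; exact applyFaults_mem hdist hpM w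
  have hmd : faultyRun f M t d = f (Fin.last d) ((f i).symm (faultyRun f M t i.val)) := by
    rw [faultyRun_above f M i hmaxle t d hid le_rfl, hlast]
  rw [hmd]
  intro hEq
  have h1 : (f i).symm (faultyRun f M t i.val) = t := (f (Fin.last d)).injective hEq
  have h2 : faultyRun f M t i.val = f i t := by
    have := congrArg (f i) h1
    rwa [Equiv.apply_symm_apply] at this
  exact hbne (by rw [← h2, hvj])
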